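/- Let M = ⟨S, A, T, s0⟩ be an nrMDP, λ a labeling function, and R, H two Mealy reward machines over the same observations Z and labeling λ. Let N = |A| + 1 and consider the Markov chain on the state set of the monitored homing product M ⊗↻_λ R,H with transition matrix P(x, y) = (1/N) Σ_{α ∈ A∪{↻}} T(x, α, y) (the chain induced by the uniform strategy π_u that plays every action in A ∪ {↻} with probability 1/N). Then, under the trajectory measure of this Markov chain started at ⟨s0, u0^R, u0^H⟩, the probability of eventually visiting CE equals 1 if there exists a history σh of M with δ*_r^R(u0^R, σh) ≠ δ*_r^H(u0^H, σh), and equals 0 otherwise. -/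

import Mathlib

open MeasureTheory Filter

attribute [local instance] Classical.propDecidable

/-- A non-rewarding Markov decision process over finite state set `S` and
finite action set `A`. -/
structure NRMDP (S A : Type) [Fintype S] [Fintype A] where
  T : S → A → S → ℝ
  T_nonneg : ∀ s a s', 0 ≤ T s a s'
  T_le_one : ∀ s a s', T s a s' ≤ 1
  T_sum_one : ∀ s a, ∑ s', T s a s' = 1
  s0 : S

/-- A Mealy reward machine over the finite observation set `Z` with
distinguished observation `null`. -/
structure MRM (U Z : Type) [Fintype U] [Fintype Z] (null : Z) where
  u0 : U
  δu : U → Z → U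
  δr : U → Z → ℝ
  c : ℝ
  δu_null : ∀ u, δu u null = u
  δr_null : ∀ u, δr u null = c

variable {S A U Z St Ac : Type}

/-- `ValidFrom T s steps` : the alternating sequence starting at `s` whose
successive (action, next-state) steps are `steps` has positive transition
probability at every step. -/
def ValidFrom (T : St → Ac → St → ℝ) : St → List (Ac × St) → Prop
  | _, [] => True
  | s, step :: rest => 0 < T s step.1 step.2 ∧ ValidFrom T step.2 rest

/-- Transition function of the synchronized product `M ⊗_λ R`. -/
noncomputable def prodT (T : S → A → S → ℝ) (lab : A → S → Z) (δu : U → Z → U) :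
    S × U → A → S × U → ℝ :=
  fun p a q => if q.2 = δu p.2 (lab a q.1) then T p.1 a q.1 else 0

/-- The map `B` (on the step list of a history), lifting a history of `M`
to a history of the synchronized product by tracking the MRM node. -/
def liftHist (lab : A → S → Z) (δu : U → Z → U) : U → List (A × S) → List (A × (S × U))
  | _, [] => []
  | u, (a, s') :: rest =>
      (a, (s', δu u (lab a s'))) :: liftHist lab δu (δu u (lab a s')) rest

variable {UR UH : Type}

/-- Transition function of the monitored homing product `M ⊗↻_λ R,H`.
States are `Option (S × UR × UH)` with `none` playing the role of the
counter-example state `CE`; actions are `A ⊕ Unit` with `Sum.inr ()`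
playing the role of the reset action `↻`. -/
noncomputable def monT [Fintype S] [Fintype UR] [Fintype UH] [Fintype Z] {null : Z}
    (T : S → A → S → ℝ) (lab : A → S → Z)
    (R : MRM UR Z null) (H : MRM UH Z null) (s0 : S) :
    Option (S × UR × UH) → A ⊕ Unit → Option (S × UR × UH) → ℝ
  | none, _, none => 1
  | none, _, some _ => 0
  | some x, Sum.inl a, some y =>
      if R.δr x.2.1 (lab a y.1) = H.δr x.2.2 (lab a y.1) ∧
         y.2.1 = R.δu x.2.1 (lab a y.1) ∧ y.2.2 = H.δu x.2.2 (lab a y.1)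
      then T x.1 a y.1 else 0
  | some x, Sum.inl a, none =>
      ∑ s' : S, if R.δr x.2.1 (lab a s') ≠ H.δr x.2.2 (lab a s') then T x.1 a s' else 0
  | some _, Sum.inr _, some y => if y = (s0, R.u0, H.u0) then 1 else 0
  | some _, Sum.inr _, none => 0

/-- Every trajectory space `ℕ → X` over a (finite) state space `X` carries
the product of the discrete σ-algebras. -/
instance trajMeasurableSpace (X : Type) : MeasurableSpace (ℕ → X) :=
  @MeasurableSpace.pi ℕ (fun _ => X) (fun _ => ⊤)

/-- The cylinder of infinite trajectories extending the finite prefix `pre`. -/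
def Cyl {X : Type} (pre : List X) : Set (ℕ → X) :=
  {ω | ∀ i : ℕ, i < pre.length → pre[i]? = some (ω i)}

/-- Probability of traversing the finite state sequence `l` starting from
`x` in the Markov chain with transition matrix `P`. -/
noncomputable def chainFrom {X : Type} (P : X → X → ℝ) : X → List X → ℝ
  | _, [] => 1
  | x, y :: rest => P x y * chainFrom P y rest

/-- Probability of the finite trajectory prefix `pre` (including time 0) in
the Markov chain with transition matrix `P` started at `start`. -/
noncomputable def chainPrefixProb {X : Type} (P : X → X → ℝ) (start : X) :
    List X → ℝ
  | [] => 1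
  | y :: rest => if y = start then chainFrom P y rest else 0

/-- `IsChainMeasure P start μ` : `μ` is the trajectory probability measure
(given by the Ionescu–Tulcea theorem) of the Markov chain with transition
matrix `P` started at `start`, characterized by its values on cylinders. -/
def IsChainMeasure {X : Type} (P : X → X → ℝ) (start : X)
    (μ : MeasureTheory.Measure (ℕ → X)) : Prop :=
  MeasureTheory.IsProbabilityMeasure μ ∧
    ∀ pre : List X, μ (Cyl pre) = ENNReal.ofReal (chainPrefixProb P start pre)

/-- The reward trace `δ*_r(u, ·)` assigned by an MRM to (the step list of)
a history. -/
def rewardTrace (lab : A → S → Z) (δu : U → Z → U) (δr : U → Z → ℝ) :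
    U → List (A × S) → List ℝ
  | _, [] => []
  | u, (a, s') :: rest =>
      δr u (lab a s') :: rewardTrace lab δu δr (δu u (lab a s')) rest

section Generic
variable {X : Type} [Fintype X]

/-- Cylinder indexed by a function on `Fin n`. -/
def Cylf {X : Type} {n : ℕ} (f : Fin n → X) : Set (ℕ → X) :=
  {ω | ∀ i : Fin n, ω i = f i}

lemma Cyl_ofFn {n : ℕ} (f : Fin n → X) : Cyl (List.ofFn f) = Cylf f := by
  ext ω
  simp only [Cyl, Cylf, Set.mem_setOf_eq, List.length_ofFn, List.getElem?_ofFn,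
    List.ofFnNthVal]
  constructor
  · intro h i
    have := h i i.isLt
    rw [dif_pos i.isLt] at this
    simpa using this.symm
  · intro h i hi
    rw [dif_pos hi]
    exact congrArg some (h ⟨i, hi⟩).symm

lemma measurableSet_Cylf {n : ℕ} (f : Fin n → X) : MeasurableSet (Cylf f) := by
  have : Cylf f = ⋂ i : Fin n, (fun ω : ℕ → X => ω i) ⁻¹' {f i} := by
    ext ω; simp [Cylf]
  rw [this]
  letI : MeasurableSpace X := ⊤
  exact MeasurableSet.iInter fun i =>
    measurable_pi_apply (i : ℕ) MeasurableSpace.measurableSet_top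

lemma disjoint_Cylf {n : ℕ} {f g : Fin n → X} (h : f ≠ g) :
    Disjoint (Cylf f) (Cylf g) := by
  rw [Set.disjoint_left]
  intro ω hf hg
  exact h (funext fun i => (hf i).symm.trans (hg i))

lemma measure_biUnion_Cylf {P : X → X → ℝ} {start : X}
    {μ : MeasureTheory.Measure (ℕ → X)} (hμ : IsChainMeasure P start μ)
    {n : ℕ} (G : Finset (Fin n → X)) :
    μ (⋃ f ∈ G, Cylf f) =
      ∑ f ∈ G, ENNReal.ofReal (chainPrefixProb P start (List.ofFn f)) := by
  rw [measure_biUnion_finset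
    (fun f _ g _ hfg => disjoint_Cylf hfg) (fun f _ => measurableSet_Cylf f)]
  exact Finset.sum_congr rfl fun f _ => by rw [← Cyl_ofFn]; exact hμ.2 _

lemma sum_pi_succ {n : ℕ} (F : (Fin (n + 1) → X) → ℝ) :
    ∑ f : Fin (n + 1) → X, F f = ∑ y : X, ∑ g : Fin n → X, F (Fin.cons y g) := by
  calc ∑ f : Fin (n + 1) → X, F f
      = ∑ p : X × (Fin n → X), F (Fin.cons p.1 p.2) :=
        Fintype.sum_equiv (Fin.consEquiv (fun _ : Fin (n + 1) => X)).symm _ _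
          (fun f => (congrArg F (Fin.cons_self_tail f)).symm)
    _ = ∑ y : X, ∑ g : Fin n → X, F (Fin.cons y g) := Fintype.sum_prod_type _

lemma chainFrom_cons {P : X → X → ℝ} {n : ℕ} (x y : X) (g : Fin n → X) :
    chainFrom P x (List.ofFn (Fin.cons y g)) = P x y * chainFrom P y (List.ofFn g) := by
  rw [List.ofFn_succ]
  simp only [chainFrom, Fin.cons_zero, Fin.cons_succ]

lemma chainFrom_nonneg {P : X → X → ℝ} (hP : ∀ x y, 0 ≤ P x y) :
    ∀ (l : List X) (x : X), 0 ≤ chainFrom P x l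
  | [], _ => by simp [chainFrom]
  | y :: rest, x => mul_nonneg (hP x y) (chainFrom_nonneg hP rest y)

lemma chainFrom_le_one {P : X → X → ℝ} (hP : ∀ x y, 0 ≤ P x y)
    (hP1 : ∀ x y, P x y ≤ 1) :
    ∀ (l : List X) (x : X), chainFrom P x l ≤ 1
  | [], _ => by simp [chainFrom]
  | y :: rest, x =>
      mul_le_one₀ (hP1 x y) (chainFrom_nonneg hP rest y) (chainFrom_le_one hP hP1 rest y)

lemma sum_chainFrom_eq_one {P : X → X → ℝ} (hrow : ∀ x, ∑ y, P x y = 1) :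
    ∀ (n : ℕ) (x : X), ∑ g : Fin n → X, chainFrom P x (List.ofFn g) = 1 := by
  intro n
  induction n with
  | zero => intro x; simp [chainFrom, List.ofFn_zero]
  | succ n ih =>
      intro x
      rw [sum_pi_succ]
      have : ∀ y : X, ∑ g : Fin n → X, chainFrom P x (List.ofFn (Fin.cons y g))
          = P x y := by
        intro y
        simp only [chainFrom_cons, ← Finset.mul_sum, ih y, mul_one]
      simp only [this, hrow x]

/-- expected survival mass after `n` steps, avoiding `dead`. -/
noncomputable def rAlive (P : X → X → ℝ) (dead : X) : ℕ → X → ℝ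
  | 0, _ => 1
  | n + 1, x => ∑ y ∈ Finset.univ.filter (· ≠ dead), P x y * rAlive P dead n y

lemma rAlive_nonneg {P : X → X → ℝ} (hP : ∀ x y, 0 ≤ P x y) (dead : X) :
    ∀ (n : ℕ) (x : X), 0 ≤ rAlive P dead n x
  | 0, _ => zero_le_one
  | n + 1, x => Finset.sum_nonneg fun y _ =>
      mul_nonneg (hP x y) (rAlive_nonneg hP dead n y)

lemma sum_alive_chainFrom {P : X → X → ℝ} (dead : X) :
    ∀ (n : ℕ) (x : X),
      ∑ g ∈ Finset.univ.filter (fun g : Fin n → X => ∀ i, g i ≠ dead),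
        chainFrom P x (List.ofFn g) = rAlive P dead n x := by
  intro n
  induction n with
  | zero =>
      intro x
      rw [Finset.sum_filter]
      simp [chainFrom, List.ofFn_zero, rAlive]
  | succ n ih =>
      intro x
      rw [Finset.sum_filter, sum_pi_succ
        (fun f => if (∀ i, f i ≠ dead) then chainFrom P x (List.ofFn f) else 0)]
      have hsplit : ∀ (y : X) (g : Fin n → X),
          (∀ i, (Fin.cons y g : Fin (n + 1) → X) i ≠ dead) ↔
            (y ≠ dead ∧ ∀ i, g i ≠ dead) := by
        intro y g
        constructor
        · intro h
          exact ⟨by simpa using h 0, fun i => by simpa using h i.succ⟩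
        · intro h i
          refine Fin.cases ?_ ?_ i
          · simpa using h.1
          · intro j; simpa using h.2 j
      have hterm : ∀ y : X,
          (∑ g : Fin n → X, if (∀ i, (Fin.cons y g : Fin (n + 1) → X) i ≠ dead)
            then chainFrom P x (List.ofFn (Fin.cons y g)) else 0)
          = if y ≠ dead then P x y * rAlive P dead n y else 0 := by
        intro y
        by_cases hy : y ≠ dead
        · rw [if_pos hy, ← ih y, Finset.sum_filter, Finset.mul_sum]
          refine Finset.sum_congr rfl fun g _ => ?_
          rw [chainFrom_cons]
          by_cases hg : ∀ i, g i ≠ dead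
          · have hc : ∀ i, (Fin.cons y g : Fin (n + 1) → X) i ≠ dead :=
              (hsplit y g).2 ⟨hy, hg⟩
            rw [if_pos hc, if_pos hg]
          · have hc : ¬ ∀ i, (Fin.cons y g : Fin (n + 1) → X) i ≠ dead :=
              fun h => hg ((hsplit y g).1 h).2
            rw [if_neg hc, if_neg hg, mul_zero]
        · refine (Finset.sum_eq_zero fun g _ => ?_).trans (if_neg hy).symm
          have hc : ¬ ∀ i, (Fin.cons y g : Fin (n + 1) → X) i ≠ dead :=
            fun h => hy ((hsplit y g).1 h).1
          exact if_neg hc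
      simp only [hterm]
      rw [← Finset.sum_filter]
      rfl

lemma rAlive_dead {P : X → X → ℝ} {dead : X}
    (habs : ∀ y, y ≠ dead → P dead y = 0) (n : ℕ) :
    rAlive P dead (n + 1) dead = 0 := by
  refine Finset.sum_eq_zero fun y hy => ?_
  rw [habs y (Finset.mem_filter.1 hy).2, zero_mul]

lemma rAlive_add_le {P : X → X → ℝ} {dead : X} {k : ℕ} {ε : ℝ}
    (hP : ∀ x y, 0 ≤ P x y) (habs : ∀ y, y ≠ dead → P dead y = 0)
    (hk : 1 ≤ k) (hε : ε ≤ 1)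
    (hkey : ∀ y, y ≠ dead → rAlive P dead k y ≤ 1 - ε) :
    ∀ (n : ℕ) (x : X), rAlive P dead (n + k) x ≤ (1 - ε) * rAlive P dead n x := by
  intro n
  induction n with
  | zero =>
      intro x
      by_cases hx : x = dead
      · subst hx
        obtain ⟨k', rfl⟩ : ∃ k', k = k' + 1 := ⟨k - 1, by omega⟩
        rw [Nat.zero_add, rAlive_dead habs k']
        simp only [rAlive, mul_one]
        linarith
      · simpa [rAlive] using hkey x hx
  | succ n ih =>
      intro x
      have : n + 1 + k = (n + k) + 1 := by omega
      rw [this]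
      show ∑ y ∈ Finset.univ.filter (· ≠ dead), P x y * rAlive P dead (n + k) y ≤ _
      calc ∑ y ∈ Finset.univ.filter (· ≠ dead), P x y * rAlive P dead (n + k) y
          ≤ ∑ y ∈ Finset.univ.filter (· ≠ dead),
              P x y * ((1 - ε) * rAlive P dead n y) :=
            Finset.sum_le_sum fun y _ =>
              mul_le_mul_of_nonneg_left (ih y) (hP x y)
        _ = (1 - ε) * rAlive P dead (n + 1) x := by
            show _ = (1 - ε) * ∑ y ∈ Finset.univ.filter (· ≠ dead),
              P x y * rAlive P dead n y
            rw [Finset.mul_sum]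
            exact Finset.sum_congr rfl fun y _ => by ring

lemma rAlive_pow_le {P : X → X → ℝ} {dead : X} {k : ℕ} {ε : ℝ}
    (hP : ∀ x y, 0 ≤ P x y) (habs : ∀ y, y ≠ dead → P dead y = 0)
    (hk : 1 ≤ k) (hε0 : 0 ≤ ε) (hε : ε ≤ 1)
    (hkey : ∀ y, y ≠ dead → rAlive P dead k y ≤ 1 - ε) (x : X) :
    ∀ m : ℕ, rAlive P dead (m * k) x ≤ (1 - ε) ^ m
  | 0 => by simp [rAlive]
  | m + 1 => by
      have h1 : (m + 1) * k = m * k + k := by ring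
      rw [h1]
      calc rAlive P dead (m * k + k) x
          ≤ (1 - ε) * rAlive P dead (m * k) x :=
            rAlive_add_le hP habs hk hε hkey (m * k) x
        _ ≤ (1 - ε) * (1 - ε) ^ m :=
            mul_le_mul_of_nonneg_left (rAlive_pow_le hP habs hk hε0 hε hkey x m)
              (by linarith)
        _ = (1 - ε) ^ (m + 1) := (pow_succ' _ _).symm

lemma forall_cons_ne {n : ℕ} (y : X) (g : Fin n → X) (dead : X) :
    (∀ i, (Fin.cons y g : Fin (n + 1) → X) i ≠ dead) ↔
      (y ≠ dead ∧ ∀ i, g i ≠ dead) := by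
  constructor
  · intro h
    exact ⟨by simpa using h 0, fun i => by simpa using h i.succ⟩
  · intro h i
    refine Fin.cases ?_ ?_ i
    · simpa using h.1
    · intro j; simpa using h.2 j

lemma chainPrefixProb_nonneg {P : X → X → ℝ} (hP : ∀ x y, 0 ≤ P x y)
    (start : X) : ∀ l : List X, 0 ≤ chainPrefixProb P start l
  | [] => zero_le_one
  | y :: rest => by
      show (0:ℝ) ≤ if y = start then chainFrom P y rest else 0
      split_ifs
      · exact chainFrom_nonneg hP rest y
      · exact le_rfl

lemma sum_alive_prefix {P : X → X → ℝ} {dead start : X} (hsd : start ≠ dead) (n : ℕ) :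
    ∑ f ∈ Finset.univ.filter (fun f : Fin (n + 1) → X => ∀ i, f i ≠ dead),
      chainPrefixProb P start (List.ofFn f) = rAlive P dead n start := by
  rw [Finset.sum_filter, sum_pi_succ
    (fun f => if (∀ i, f i ≠ dead) then chainPrefixProb P start (List.ofFn f) else 0)]
  have hterm : ∀ y : X,
      (∑ g : Fin n → X, if (∀ i, (Fin.cons y g : Fin (n + 1) → X) i ≠ dead)
        then chainPrefixProb P start (List.ofFn (Fin.cons y g)) else 0)
      = if y = start then rAlive P dead n start else 0 := by
    intro y
    by_cases hy : y = start
    · subst hy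
      rw [if_pos rfl, ← sum_alive_chainFrom dead n y, Finset.sum_filter]
      refine Finset.sum_congr rfl fun g _ => ?_
      have hpp : chainPrefixProb P y (List.ofFn (Fin.cons y g))
          = chainFrom P y (List.ofFn g) := by
        rw [List.ofFn_succ]
        simp [chainPrefixProb, Fin.cons_zero, Fin.cons_succ]
      by_cases hg : ∀ i, g i ≠ dead
      · rw [if_pos ((forall_cons_ne y g dead).2 ⟨hsd, hg⟩), if_pos hg, hpp]
      · rw [if_neg (fun hh => hg ((forall_cons_ne y g dead).1 hh).2), if_neg hg]
    · rw [if_neg hy]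
      refine Finset.sum_eq_zero fun g _ => ?_
      split_ifs with hc
      · rw [List.ofFn_succ]
        simp [chainPrefixProb, Fin.cons_zero, hy]
      · rfl
  simp only [hterm]
  simp

lemma sum_alive_chainFrom' {P : X → X → ℝ} (dead : X) (n : ℕ) (x : X)
    {inst : DecidablePred fun g : Fin n → X => ∀ i, g i ≠ dead} :
    ∑ g ∈ @Finset.filter _ (fun g : Fin n → X => ∀ i, g i ≠ dead) inst Finset.univ,
      chainFrom P x (List.ofFn g) = rAlive P dead n x := by
  convert sum_alive_chainFrom (P := P) dead n x using 2
  ext g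
  simp only [Finset.mem_filter]

lemma sum_alive_prefix' {P : X → X → ℝ} {dead start : X} (hsd : start ≠ dead) (n : ℕ)
    {inst : DecidablePred fun f : Fin (n + 1) → X => ∀ i, f i ≠ dead} :
    ∑ f ∈ @Finset.filter _ (fun f : Fin (n + 1) → X => ∀ i, f i ≠ dead) inst Finset.univ,
      chainPrefixProb P start (List.ofFn f) = rAlive P dead n start := by
  convert sum_alive_prefix (P := P) hsd n using 2
  ext g
  simp only [Finset.mem_filter]

end Generic

section Specific

variable [Fintype S] [Fintype A] [Fintype UR] [Fintype UH] [Fintype Z]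

lemma monT_nonneg {null : Z} (M : NRMDP S A) (lab : A → S → Z)
    (R : MRM UR Z null) (H : MRM UH Z null) (x : Option (S × UR × UH))
    (α : A ⊕ Unit) (y : Option (S × UR × UH)) :
    0 ≤ monT M.T lab R H M.s0 x α y := by
  rcases x with _ | x <;> rcases α with a | u <;> rcases y with _ | y <;>
    simp only [monT] <;>
    first
      | exact zero_le_one
      | exact le_refl 0
      | exact Finset.sum_nonneg fun s' _ => by
          split_ifs
          · exact M.T_nonneg _ _ _
          · exact le_refl 0
      | (split_ifs
         · exact M.T_nonneg _ _ _
         · exact le_refl 0)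
      | (split_ifs <;> norm_num)

lemma sum_pair_ite {β γ : Type} [Fintype β] [Fintype γ] (C : Prop) (u : β) (v : γ) (t : ℝ) :
    ∑ p : β × γ, (if C ∧ p.1 = u ∧ p.2 = v then t else 0) = if C then t else 0 := by
  have h : ∀ p : β × γ, (if C ∧ p.1 = u ∧ p.2 = v then t else 0)
      = if p = (u, v) then (if C then t else 0) else 0 := by
    intro p
    by_cases hp : p = (u, v)
    · subst hp
      simp
    · rw [if_neg hp, if_neg]
      rintro ⟨-, h1, h2⟩
      exact hp (Prod.ext h1 h2)
  simp only [h]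
  simp

lemma monT_sum {null : Z} (M : NRMDP S A) (lab : A → S → Z)
    (R : MRM UR Z null) (H : MRM UH Z null) (x : Option (S × UR × UH))
    (α : A ⊕ Unit) :
    ∑ y, monT M.T lab R H M.s0 x α y = 1 := by
  rcases x with _ | x
  · rw [Fintype.sum_option]
    simp [monT]
  · rcases α with a | u
    · rw [Fintype.sum_option]
      have h2 : ∑ y : S × UR × UH, monT M.T lab R H M.s0 (some x) (Sum.inl a) (some y)
          = ∑ s' : S, if R.δr x.2.1 (lab a s') = H.δr x.2.2 (lab a s')
              then M.T x.1 a s' else 0 := by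
        rw [Fintype.sum_prod_type]
        refine Finset.sum_congr rfl fun s' _ => ?_
        simpa only [monT] using
          sum_pair_ite (R.δr x.2.1 (lab a s') = H.δr x.2.2 (lab a s'))
            (R.δu x.2.1 (lab a s')) (H.δu x.2.2 (lab a s')) (M.T x.1 a s')
      rw [h2]
      have h1 : monT M.T lab R H M.s0 (some x) (Sum.inl a) none
          = ∑ s' : S, if R.δr x.2.1 (lab a s') ≠ H.δr x.2.2 (lab a s')
              then M.T x.1 a s' else 0 := rfl
      rw [h1, ← Finset.sum_add_distrib]
      rw [show ∑ s' : S, ((if R.δr x.2.1 (lab a s') ≠ H.δr x.2.2 (lab a s')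
            then M.T x.1 a s' else 0) +
          (if R.δr x.2.1 (lab a s') = H.δr x.2.2 (lab a s')
            then M.T x.1 a s' else 0)) = ∑ s' : S, M.T x.1 a s' from
        Finset.sum_congr rfl fun s' _ => by by_cases hc : R.δr x.2.1 (lab a s') = H.δr x.2.2 (lab a s') <;> simp [hc]]
      exact M.T_sum_one x.1 a
    · rw [Fintype.sum_option]
      simp [monT]

/-- resulting MRM node after running a history. -/
def runNode (lab : A → S → Z) {V : Type} (δu : V → Z → V) (u : V)
    (h : List (A × S)) : V :=
  h.foldl (fun u p => δu u (lab p.1 p.2)) u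

/-- final MDP state after running a history. -/
def runState (s : S) (h : List (A × S)) : S := h.foldl (fun _ p => p.2) s

lemma runNode_snoc (lab : A → S → Z) {V : Type} (δu : V → Z → V) (u : V)
    (h : List (A × S)) (a : A) (s' : S) :
    runNode lab δu u (h ++ [(a, s')]) = δu (runNode lab δu u h) (lab a s') := by
  simp [runNode, List.foldl_append]

lemma runState_snoc (s : S) (h : List (A × S)) (a : A) (s' : S) :
    runState s (h ++ [(a, s')]) = s' := by
  simp [runState, List.foldl_append]

lemma rewardTrace_append (lab : A → S → Z) {V : Type} (δu : V → Z → V)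
    (δr : V → Z → ℝ) :
    ∀ (h h' : List (A × S)) (u : V),
      rewardTrace lab δu δr u (h ++ h') =
        rewardTrace lab δu δr u h ++ rewardTrace lab δu δr (runNode lab δu u h) h'
  | [], h', u => by simp [rewardTrace, runNode]
  | (a, s') :: rest, h', u => by
      simp only [List.cons_append, rewardTrace, runNode, List.foldl_cons,
        List.append_eq]
      rw [rewardTrace_append lab δu δr rest h' (δu u (lab a s'))]
      rfl

lemma validFrom_snoc {T : S → A → S → ℝ} :
    ∀ (h : List (A × S)) (s : S) (a : A) (s' : S),
      ValidFrom T s h → 0 < T (runState s h) a s' → ValidFrom T s (h ++ [(a, s')])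
  | [], s, a, s', _, hT => ⟨hT, trivial⟩
  | (b, t) :: rest, s, a, s', hv, hT =>
      ⟨hv.1, validFrom_snoc rest t a s' hv.2 hT⟩

lemma monT_single_le {null : Z} (M : NRMDP S A) (lab : A → S → Z)
    (R : MRM UR Z null) (H : MRM UH Z null) (x : Option (S × UR × UH))
    (α : A ⊕ Unit) (y : Option (S × UR × UH)) :
    monT M.T lab R H M.s0 x α y ≤ ∑ β : A ⊕ Unit, monT M.T lab R H M.s0 x β y :=
  Finset.single_le_sum (fun β _ => monT_nonneg M lab R H x β y) (Finset.mem_univ α)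

lemma cardA_pos : (0 : ℝ) < (Fintype.card A + 1 : ℝ) := by positivity

/-- lifting a distinguishing history to a positive-probability path to `CE`. -/
lemma lift_path {null : Z} (M : NRMDP S A) (lab : A → S → Z)
    (R : MRM UR Z null) (H : MRM UH Z null) :
    ∀ (h : List (A × S)) (s : S) (uR : UR) (uH : UH),
      ValidFrom M.T s h →
      rewardTrace lab R.δu R.δr uR h ≠ rewardTrace lab H.δu H.δr uH h →
      ∃ w : List (Option (S × UR × UH)), none ∈ w ∧
        0 < chainFrom (fun x y =>
            (∑ α : A ⊕ Unit, monT M.T lab R H M.s0 x α y) / (Fintype.card A + 1))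
          (some (s, uR, uH)) w
  | [], s, uR, uH, _, hne => absurd rfl hne
  | (a, s') :: rest, s, uR, uH, hv, hne => by
      have hT : 0 < M.T s a s' := hv.1
      by_cases hr : R.δr uR (lab a s') = H.δr uH (lab a s')
      · have hne' : rewardTrace lab R.δu R.δr (R.δu uR (lab a s')) rest ≠
            rewardTrace lab H.δu H.δr (H.δu uH (lab a s')) rest := by
          intro he
          exact hne (by simp only [rewardTrace, hr, he])
        obtain ⟨w, hw, hpos⟩ := lift_path M lab R H rest s'
          (R.δu uR (lab a s')) (H.δu uH (lab a s')) hv.2 hne'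
        refine ⟨some (s', R.δu uR (lab a s'), H.δu uH (lab a s')) :: w,
          List.mem_cons_of_mem _ hw, ?_⟩
        have hm : monT M.T lab R H M.s0 (some (s, uR, uH)) (Sum.inl a)
            (some (s', R.δu uR (lab a s'), H.δu uH (lab a s'))) = M.T s a s' := by
          simp [monT, hr]
        show 0 < _ * _
        refine mul_pos (div_pos ?_ cardA_pos) hpos
        calc (0:ℝ) < M.T s a s' := hT
          _ ≤ _ := hm ▸ monT_single_le M lab R H _ (Sum.inl a) _
      · refine ⟨[none], List.mem_singleton_self none, ?_⟩
        show 0 < _ * chainFrom _ none []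
        have h1 : chainFrom (fun x y =>
            (∑ α : A ⊕ Unit, monT M.T lab R H M.s0 x α y) / (Fintype.card A + 1))
            (none : Option (S × UR × UH)) [] = 1 := rfl
        rw [h1, mul_one]
        refine div_pos ?_ cardA_pos
        have hm : M.T s a s' ≤
            monT M.T lab R H M.s0 (some (s, uR, uH)) (Sum.inl a) none := by
          show M.T s a s' ≤ ∑ t : S, if R.δr uR (lab a t) ≠ H.δr uH (lab a t)
            then M.T s a t else 0
          calc M.T s a s' = if R.δr uR (lab a s') ≠ H.δr uH (lab a s')
              then M.T s a s' else 0 := (if_pos hr).symm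
            _ ≤ _ := Finset.single_le_sum
                (f := fun t : S => if R.δr uR (lab a t) ≠ H.δr uH (lab a t)
                  then M.T s a t else 0)
                (fun (t : S) (_ : t ∈ Finset.univ) => by
                  split_ifs
                  · exact M.T_nonneg s a t
                  · exact le_rfl) (Finset.mem_univ s')
        calc (0:ℝ) < M.T s a s' := hT
          _ ≤ monT M.T lab R H M.s0 (some (s, uR, uH)) (Sum.inl a) none := hm
          _ ≤ _ := monT_single_le M lab R H _ (Sum.inl a) _

/-- invariant: a product state reachable with positive probability corresponds
to a history whose two reward traces agree. -/
def ReachInv {null : Z} (M : NRMDP S A) (lab : A → S → Z)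
    (R : MRM UR Z null) (H : MRM UH Z null) (p : S × UR × UH) : Prop :=
  ∃ h : List (A × S), ValidFrom M.T M.s0 h ∧
    rewardTrace lab R.δu R.δr R.u0 h = rewardTrace lab H.δu H.δr H.u0 h ∧
    p.1 = runState M.s0 h ∧ p.2.1 = runNode lab R.δu R.u0 h ∧
    p.2.2 = runNode lab H.δu H.u0 h

lemma no_dist_chainFrom_zero {null : Z} (M : NRMDP S A) (lab : A → S → Z)
    (R : MRM UR Z null) (H : MRM UH Z null)
    (hno : ¬ ∃ h : List (A × S), ValidFrom M.T M.s0 h ∧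
      rewardTrace lab R.δu R.δr R.u0 h ≠ rewardTrace lab H.δu H.δr H.u0 h) :
    ∀ (l : List (Option (S × UR × UH))) (p : S × UR × UH),
      ReachInv M lab R H p → none ∈ l →
      chainFrom (fun x y =>
          (∑ α : A ⊕ Unit, monT M.T lab R H M.s0 x α y) / (Fintype.card A + 1))
        (some p) l = 0
  | [], p, _, hmem => absurd hmem List.not_mem_nil
  | y :: rest, p, hinv, hmem => by
      obtain ⟨h, hval, htr, hs, huR, huH⟩ := hinv
      show (∑ α : A ⊕ Unit, monT M.T lab R H M.s0 (some p) α y) /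
          (Fintype.card A + 1) * chainFrom _ y rest = 0
      rcases y with _ | q
      · -- step into CE has probability 0
        have hz : ∑ α : A ⊕ Unit, monT M.T lab R H M.s0 (some p) α none = 0 := by
          refine Finset.sum_eq_zero fun α _ => ?_
          rcases α with a | u
          · show (∑ s' : S, if R.δr p.2.1 (lab a s') ≠ H.δr p.2.2 (lab a s')
              then M.T p.1 a s' else 0) = 0
            refine Finset.sum_eq_zero fun s' _ => ?_
            by_cases hd : R.δr p.2.1 (lab a s') ≠ H.δr p.2.2 (lab a s')
            · rw [if_pos hd]
              by_contra hT
              have hTpos : 0 < M.T p.1 a s' :=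
                (M.T_nonneg _ _ _).lt_of_ne (Ne.symm hT)
              refine hno ⟨h ++ [(a, s')], ?_, ?_⟩
              · exact validFrom_snoc h M.s0 a s' hval (hs ▸ hTpos)
              · rw [rewardTrace_append, rewardTrace_append, htr]
                intro he
                have := List.append_cancel_left he
                simp only [rewardTrace, List.cons.injEq] at this
                exact hd (by rw [huR, huH]; exact this.1)
            · rw [if_neg hd]
          · rfl
        rw [hz, zero_div, zero_mul]
      · -- step to a live state preserves the invariant
        by_cases hp0 : ∑ α : A ⊕ Unit, monT M.T lab R H M.s0 (some p) α (some q) = 0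
        · rw [hp0, zero_div, zero_mul]
        · have hrest : none ∈ rest := by
            rcases List.mem_cons.1 hmem with h' | h'
            · exact absurd h' (by simp)
            · exact h'
          have hqpos : 0 < ∑ α : A ⊕ Unit, monT M.T lab R H M.s0 (some p) α (some q) :=
            (Finset.sum_nonneg fun α _ => monT_nonneg M lab R H _ α _).lt_of_ne
              (Ne.symm hp0)
          obtain ⟨α, -, hα⟩ := Finset.exists_lt_of_sum_lt
            (by simpa using hqpos :
              ∑ α : A ⊕ Unit, (0:ℝ) < ∑ α : A ⊕ Unit, monT M.T lab R H M.s0 (some p) α (some q))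
          have hqinv : ReachInv M lab R H q := by
            rcases α with a | u
            · have : 0 < if R.δr p.2.1 (lab a q.1) = H.δr p.2.2 (lab a q.1) ∧
                  q.2.1 = R.δu p.2.1 (lab a q.1) ∧ q.2.2 = H.δu p.2.2 (lab a q.1)
                then M.T p.1 a q.1 else 0 := hα
              by_cases hc : R.δr p.2.1 (lab a q.1) = H.δr p.2.2 (lab a q.1) ∧
                  q.2.1 = R.δu p.2.1 (lab a q.1) ∧ q.2.2 = H.δu p.2.2 (lab a q.1)
              · rw [if_pos hc] at this
                refine ⟨h ++ [(a, q.1)], validFrom_snoc h M.s0 a q.1 hval (hs ▸ this),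
                  ?_, ?_, ?_, ?_⟩
                · rw [rewardTrace_append, rewardTrace_append, htr]
                  congr 1
                  show [R.δr (runNode lab R.δu R.u0 h) (lab a q.1)] =
                    [H.δr (runNode lab H.δu H.u0 h) (lab a q.1)]
                  rw [← huR, ← huH, hc.1]
                · rw [runState_snoc]
                · rw [runNode_snoc, ← huR, hc.2.1]
                · rw [runNode_snoc, ← huH, hc.2.2]
              · rw [if_neg hc] at this
                exact absurd this (lt_irrefl 0)
            · have : (0:ℝ) < if q = (M.s0, R.u0, H.u0) then 1 else 0 := hα
              have hq : q = (M.s0, R.u0, H.u0) := by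
                by_contra hq
                rw [if_neg hq] at this
                exact absurd this (lt_irrefl 0)
              subst hq
              exact ⟨[], trivial, rfl, rfl, rfl, rfl⟩
          rw [no_dist_chainFrom_zero M lab R H hno rest q hqinv hrest, mul_zero]

end Specific


/-- Under the Markov chain induced on the monitored homing
product `M ⊗↻_λ R,H` by the uniform strategy (each action of `A ∪ {↻}`
with probability `1/(|A|+1)`), started at the initial state, the probability
of eventually visiting `CE` is `1` if some history of `M` distinguishes the
reward traces of `R` and `H`, and `0` otherwise. -/
theorem uniform_chain_hits_CE_iff
    [Fintype S] [Fintype A] [Fintype UR] [Fintype UH] [Fintype Z]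
    (M : NRMDP S A) (null : Z) (lab : A → S → Z)
    (R : MRM UR Z null) (H : MRM UH Z null)
    (μ : MeasureTheory.Measure (ℕ → Option (S × UR × UH)))
    (hμ : IsChainMeasure
      (fun x y => (∑ α : A ⊕ Unit, monT M.T lab R H M.s0 x α y) / (Fintype.card A + 1))
      (some ((M.s0 : S), (R.u0 : UR), (H.u0 : UH))) μ) :
    ((∃ h : List (A × S), ValidFrom M.T M.s0 h ∧
        rewardTrace lab R.δu R.δr R.u0 h ≠ rewardTrace lab H.δu H.δr H.u0 h) →
      μ {ω | ∃ n : ℕ, ω n = none} = 1) ∧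
    ((¬ ∃ h : List (A × S), ValidFrom M.T M.s0 h ∧
        rewardTrace lab R.δu R.δr R.u0 h ≠ rewardTrace lab H.δu H.δr H.u0 h) →
      μ {ω | ∃ n : ℕ, ω n = none} = 0) := by
  classical
  obtain ⟨hprob, hcyl⟩ := hμ
  haveI := hprob
  set P : Option (S × UR × UH) → Option (S × UR × UH) → ℝ :=
    fun x y => (∑ α : A ⊕ Unit, monT M.T lab R H M.s0 x α y) / (Fintype.card A + 1)
    with hPdef
  set start : Option (S × UR × UH) := some (M.s0, R.u0, H.u0) with hstart
  have hμ' : IsChainMeasure P start μ := ⟨hprob, hcyl⟩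
  have hPnn : ∀ x y, 0 ≤ P x y := fun x y =>
    div_nonneg (Finset.sum_nonneg fun α _ => monT_nonneg M lab R H x α y)
      (cardA_pos (A := A)).le
  have hProw : ∀ x, ∑ y, P x y = 1 := by
    intro x
    rw [hPdef]
    rw [← Finset.sum_div, Finset.sum_comm]
    rw [Finset.sum_congr rfl fun (α : A ⊕ Unit) _ => monT_sum M lab R H x α]
    rw [Finset.sum_const, Finset.card_univ, Fintype.card_sum, Fintype.card_unit,
      nsmul_eq_mul, mul_one]
    push_cast
    exact div_self (ne_of_gt (cardA_pos (A := A)))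
  have hP1 : ∀ x y, P x y ≤ 1 := by
    intro x y
    calc P x y ≤ ∑ y', P x y' :=
          Finset.single_le_sum (fun y' _ => hPnn x y') (Finset.mem_univ y)
      _ = 1 := hProw x
  have habs : ∀ y : Option (S × UR × UH), y ≠ none → P none y = 0 := by
    intro y hy
    rcases y with _ | q
    · exact absurd rfl hy
    · show (∑ α : A ⊕ Unit, monT M.T lab R H M.s0 none α (some q)) /
        ((Fintype.card A : ℝ) + 1) = 0
      have h0 : ∑ α : A ⊕ Unit, monT M.T lab R H M.s0 none α (some q) = 0 :=
        Finset.sum_eq_zero fun α _ => rfl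
      rw [h0, zero_div]
  have hEmeas : MeasurableSet {ω : ℕ → Option (S × UR × UH) | ∃ n, ω n = none} := by
    have hE : {ω : ℕ → Option (S × UR × UH) | ∃ n, ω n = none} =
        ⋃ n : ℕ, (fun ω : ℕ → Option (S × UR × UH) => ω n) ⁻¹' {none} := by
      ext ω; simp
    rw [hE]
    letI : MeasurableSpace (Option (S × UR × UH)) := ⊤
    exact MeasurableSet.iUnion fun n =>
      measurable_pi_apply n MeasurableSpace.measurableSet_top
  constructor
  · -- a distinguishing history exists : hit CE almost surely
    rintro ⟨h, hval, hne⟩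
    obtain ⟨w, hwmem, hwpos⟩ := lift_path M lab R H h M.s0 R.u0 H.u0 hval hne
    rw [← hPdef, ← hstart] at hwpos
    set c := chainFrom P start w with hc
    have hcpos : 0 < c := hwpos
    have hcle : c ≤ 1 := chainFrom_le_one hPnn hP1 w start
    set N : ℝ := (Fintype.card A : ℝ) + 1 with hN
    have hNpos : 0 < N := by positivity
    have hN1 : 1 ≤ N := by
      rw [hN]; have : (0:ℝ) ≤ (Fintype.card A : ℝ) := Nat.cast_nonneg _
      linarith
    set ε := c / N with hε
    have hε0 : 0 < ε := div_pos hcpos hNpos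
    have hε1 : ε ≤ 1 := by
      rw [hε, div_le_one hNpos]; linarith
    set l : List (Option (S × UR × UH)) := start :: w with hl
    have hk1 : 1 ≤ l.length := by rw [hl]; simp
    -- from any live state, survival for l.length steps is at most 1 - ε
    have hkey : ∀ y : Option (S × UR × UH), y ≠ none →
        rAlive P none l.length y ≤ 1 - ε := by
      intro y hy
      rw [← sum_alive_chainFrom' none l.length y]
      have hg0 : ¬ (∀ i, l.get i ≠ none) := by
        intro hall
        obtain ⟨i, hi⟩ := List.mem_iff_get.1 (List.mem_cons_of_mem start hwmem)
        exact hall i hi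
      have hsub : Finset.univ.filter
          (fun g : Fin l.length → Option (S × UR × UH) => ∀ i, g i ≠ none)
          ⊆ Finset.univ.erase l.get := by
        intro g hg
        rw [Finset.mem_erase]
        refine ⟨fun he => hg0 ?_, Finset.mem_univ g⟩
        rw [← he]
        exact (Finset.mem_filter.1 hg).2
      have hεle : ε ≤ chainFrom P y l := by
        have hstep : 1 ≤ ∑ α : A ⊕ Unit, monT M.T lab R H M.s0 y α start := by
          rcases y with _ | z
          · exact absurd rfl hy
          · have h1 : monT M.T lab R H M.s0 (some z) (Sum.inr ()) start = 1 := by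
              rw [hstart]; simp [monT]
            calc (1:ℝ) = _ := h1.symm
              _ ≤ _ := monT_single_le M lab R H (some z) (Sum.inr ()) start
        have hys : 1 / N ≤ P y start := by
          rw [hPdef]
          exact (div_le_div_iff_of_pos_right hNpos).2 hstep
        calc ε = (1 / N) * c := by rw [hε]; ring
          _ ≤ P y start * c :=
            mul_le_mul_of_nonneg_right hys hcpos.le
          _ = chainFrom P y l := rfl
      refine le_trans (Finset.sum_le_sum_of_subset_of_nonneg hsub
        (fun g _ _ => chainFrom_nonneg hPnn _ y)) ?_
      rw [Finset.sum_erase_eq_sub (Finset.mem_univ _),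
        sum_chainFrom_eq_one hProw, List.ofFn_get]
      linarith
    -- survival probability for n steps
    have hAn : ∀ n : ℕ, μ {ω : ℕ → Option (S × UR × UH) | ∀ n', ω n' ≠ none}
        ≤ ENNReal.ofReal (rAlive P none n start) := by
      intro n
      have hsub : {ω : ℕ → Option (S × UR × UH) | ∀ n', ω n' ≠ none} ⊆
          ⋃ f ∈ Finset.univ.filter
            (fun f : Fin (n + 1) → Option (S × UR × UH) => ∀ i, f i ≠ none),
            Cylf f := by
        intro ω hω
        simp only [Set.mem_iUnion]
        exact ⟨fun i => ω i,
          Finset.mem_filter.2 ⟨Finset.mem_univ _, fun i => hω i⟩, fun i => rfl⟩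
      calc μ {ω : ℕ → Option (S × UR × UH) | ∀ n', ω n' ≠ none}
          ≤ μ (⋃ f ∈ Finset.univ.filter
              (fun f : Fin (n + 1) → Option (S × UR × UH) => ∀ i, f i ≠ none),
              Cylf f) := measure_mono hsub
        _ ≤ ENNReal.ofReal (rAlive P none n start) := by
            rw [measure_biUnion_Cylf hμ',
              ← ENNReal.ofReal_sum_of_nonneg (fun f _ =>
                chainPrefixProb_nonneg hPnn start _),
              sum_alive_prefix' (show start ≠ none by
                rw [hstart]; exact Option.some_ne_none _) n]
    have hcompl : μ {ω : ℕ → Option (S × UR × UH) | ∃ n, ω n = none}ᶜ = 0 := by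
      have hequiv : {ω : ℕ → Option (S × UR × UH) | ∃ n, ω n = none}ᶜ =
          {ω : ℕ → Option (S × UR × UH) | ∀ n', ω n' ≠ none} := by
        ext ω; simp
      rw [hequiv]
      refine le_antisymm ?_ zero_le
      have hbound : ∀ m : ℕ,
          μ {ω : ℕ → Option (S × UR × UH) | ∀ n', ω n' ≠ none}
          ≤ ENNReal.ofReal ((1 - ε) ^ m) := fun m =>
        (hAn (m * l.length)).trans (ENNReal.ofReal_le_ofReal
          (rAlive_pow_le hPnn habs hk1 hε0.le hε1 hkey start m))
      have htend : Tendsto (fun m : ℕ => ENNReal.ofReal ((1 - ε) ^ m)) atTop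
          (nhds 0) := by
        rw [show (0 : ENNReal) = ENNReal.ofReal 0 from ENNReal.ofReal_zero.symm]
        exact ENNReal.tendsto_ofReal
          (tendsto_pow_atTop_nhds_zero_of_lt_one (by linarith) (by linarith))
      exact ge_of_tendsto' htend hbound
    exact (MeasureTheory.prob_compl_eq_zero_iff hEmeas).1 hcompl
  · -- no distinguishing history : CE is never reached
    intro hno
    have hset : {ω : ℕ → Option (S × UR × UH) | ∃ n, ω n = none} =
        ⋃ n : ℕ, {ω : ℕ → Option (S × UR × UH) | ω n = none} := by
      ext ω; simp [Set.mem_iUnion]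
    rw [hset]
    refine MeasureTheory.measure_iUnion_null fun n => ?_
    have hset2 : {ω : ℕ → Option (S × UR × UH) | ω n = none} =
        ⋃ f ∈ Finset.univ.filter
          (fun f : Fin (n + 1) → Option (S × UR × UH) => f (Fin.last n) = none),
          Cylf f := by
      ext ω
      simp only [Set.mem_setOf_eq, Set.mem_iUnion, Finset.mem_filter,
        Finset.mem_univ, true_and]
      constructor
      · intro hw
        refine ⟨fun i => ω i, ?_, fun i => rfl⟩
        show ω ((Fin.last n : Fin (n + 1)) : ℕ) = none
        rw [Fin.val_last]
        exact hw
      · rintro ⟨f, hf, hωf⟩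
        have h2 := hωf (Fin.last n)
        rw [hf] at h2
        rw [show n = ((Fin.last n : Fin (n + 1)) : ℕ) from (Fin.val_last n).symm]
        exact h2
    rw [hset2, measure_biUnion_Cylf hμ']
    refine Finset.sum_eq_zero fun f hf => ?_
    have hlast : f (Fin.last n) = none := (Finset.mem_filter.1 hf).2
    have hzero : chainPrefixProb P start (List.ofFn f) = 0 := by
      rw [List.ofFn_succ]
      simp only [chainPrefixProb]
      by_cases h0 : f 0 = start
      · rw [if_pos h0, h0]
        cases n with
        | zero =>
            exact absurd (h0.symm.trans hlast) (by rw [hstart]; simp)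
        | succ m =>
            have hmem : none ∈ List.ofFn (fun i : Fin (m + 1) => f i.succ) := by
              rw [List.mem_ofFn]
              refine ⟨Fin.last m, ?_⟩
              show f (Fin.last m).succ = none
              rw [Fin.succ_last]
              exact hlast
            have hz := no_dist_chainFrom_zero M lab R H hno
              (List.ofFn (fun i : Fin (m + 1) => f i.succ))
              (M.s0, R.u0, H.u0) ⟨[], trivial, rfl, rfl, rfl, rfl⟩ hmem
            rw [← hPdef] at hz
            exact hz
      · rw [if_neg h0]
    rw [hzero, ENNReal.ofReal_zero]
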